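/- For r > 0, f ∈ ℝ, and integer N₁, with B₁(y) = 1 + 2 sin² y/r² and A₁ = B₁(f), one has A₁^{−1/2}·(sin² f · sin(2f))/r⁴ = (1/r²)∫_{N₁π}^f (2B₁^{1/2} − B₁^{−3/2} − B₁^{−1/2}) dy + (1/2)∫_{N₁π}^f B₁^{−3/2}(−3B₁³ + 5B₁² − B₁ − 1) dy. -/

import Mathlib

open Real intervalIntegral

theorem skyrme_stmt12 (r : ℝ) (hr : 0 < r) (N₁ : ℤ) (f : ℝ) :
    (1 + 2 * Real.sin f ^ 2 / r ^ 2) ^ (-(1/2) : ℝ) *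
        (Real.sin f ^ 2 * Real.sin (2 * f)) / r ^ 4
    = (1 / r ^ 2) * (∫ y in ((N₁ : ℝ) * Real.pi)..f,
        2 * (1 + 2 * Real.sin y ^ 2 / r ^ 2) ^ ((1/2) : ℝ)
          - (1 + 2 * Real.sin y ^ 2 / r ^ 2) ^ (-(3/2) : ℝ)
          - (1 + 2 * Real.sin y ^ 2 / r ^ 2) ^ (-(1/2) : ℝ))
      + (1/2) * ∫ y in ((N₁ : ℝ) * Real.pi)..f,
          (1 + 2 * Real.sin y ^ 2 / r ^ 2) ^ (-(3/2) : ℝ) *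
            (-3 * (1 + 2 * Real.sin y ^ 2 / r ^ 2) ^ 3
              + 5 * (1 + 2 * Real.sin y ^ 2 / r ^ 2) ^ 2
              - (1 + 2 * Real.sin y ^ 2 / r ^ 2) - 1) := by
  have hr' : r ≠ 0 := hr.ne'
  have hB : ∀ y : ℝ, (0:ℝ) < 1 + 2 * Real.sin y ^ 2 / r ^ 2 := fun y => by positivity
  set a : ℝ := (N₁ : ℝ) * Real.pi with ha
  set F : ℝ → ℝ := fun y => (1 + 2 * Real.sin y ^ 2 / r ^ 2) ^ (-(1/2) : ℝ) *
      (Real.sin y ^ 2 * Real.sin (2 * y)) / r ^ 4 with hF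
  set g₁ : ℝ → ℝ := fun y =>
      2 * (1 + 2 * Real.sin y ^ 2 / r ^ 2) ^ ((1/2) : ℝ)
        - (1 + 2 * Real.sin y ^ 2 / r ^ 2) ^ (-(3/2) : ℝ)
        - (1 + 2 * Real.sin y ^ 2 / r ^ 2) ^ (-(1/2) : ℝ) with hg1
  set g₂ : ℝ → ℝ := fun y =>
      (1 + 2 * Real.sin y ^ 2 / r ^ 2) ^ (-(3/2) : ℝ) *
        (-3 * (1 + 2 * Real.sin y ^ 2 / r ^ 2) ^ 3
          + 5 * (1 + 2 * Real.sin y ^ 2 / r ^ 2) ^ 2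
          - (1 + 2 * Real.sin y ^ 2 / r ^ 2) - 1) with hg2
  set g : ℝ → ℝ := fun y => (1 / r ^ 2) * g₁ y + (1/2) * g₂ y with hg
  -- continuity
  have hBc : Continuous fun y : ℝ => 1 + 2 * Real.sin y ^ 2 / r ^ 2 := by
    continuity
  have hrp : ∀ p : ℝ, Continuous fun y : ℝ => (1 + 2 * Real.sin y ^ 2 / r ^ 2) ^ p :=
    fun p => hBc.rpow_const (fun y => Or.inl (hB y).ne')
  have hg1c : Continuous g₁ := by
    rw [hg1]; exact ((continuous_const.mul (hrp _)).sub (hrp _)).sub (hrp _)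
  have hg2c : Continuous g₂ := by
    rw [hg2]
    exact (hrp _).mul (by continuity)
  have hgc : Continuous g := by
    rw [hg]; exact (continuous_const.mul hg1c).add (continuous_const.mul hg2c)
  -- derivative
  have hderiv : ∀ y : ℝ, HasDerivAt F (g y) y := by
    intro y
    have hsin : HasDerivAt (fun y => Real.sin y ^ 2) (2 * Real.sin y * Real.cos y) y := by
      simpa [Pi.pow_def] using (Real.hasDerivAt_sin y).pow 2
    have hBd : HasDerivAt (fun y : ℝ => 1 + 2 * Real.sin y ^ 2 / r ^ 2)
        (2 * (2 * Real.sin y * Real.cos y) / r ^ 2) y :=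
      (((hsin.const_mul 2).div_const (r ^ 2)).const_add 1)
    have hpow : HasDerivAt (fun y : ℝ => (1 + 2 * Real.sin y ^ 2 / r ^ 2) ^ (-(1/2) : ℝ))
        (2 * (2 * Real.sin y * Real.cos y) / r ^ 2 * (-(1/2)) *
          (1 + 2 * Real.sin y ^ 2 / r ^ 2) ^ ((-(1/2)) - 1 : ℝ)) y :=
      hBd.rpow_const (Or.inl (hB y).ne')
    have hs2y : HasDerivAt (fun y : ℝ => Real.sin (2 * y)) (Real.cos (2 * y) * 2) y := by
      simpa [Function.comp_def] using (Real.hasDerivAt_sin (2*y)).comp y ((hasDerivAt_id y).const_mul 2)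
    have hprod : HasDerivAt (fun y : ℝ => Real.sin y ^ 2 * Real.sin (2 * y))
        (2 * Real.sin y * Real.cos y * Real.sin (2 * y) +
          Real.sin y ^ 2 * (Real.cos (2 * y) * 2)) y := hsin.mul hs2y
    have hFull : HasDerivAt F _ y := (hpow.mul hprod).div_const (r ^ 4)
    convert hFull using 1
    -- algebra: show g y equals the raw derivative
    set t : ℝ := Real.sqrt (1 + 2 * Real.sin y ^ 2 / r ^ 2) with htdef
    have ht : 0 < t := Real.sqrt_pos.mpr (hB y)
    have ht2 : t ^ 2 = 1 + 2 * Real.sin y ^ 2 / r ^ 2 := Real.sq_sqrt (hB y).le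
    have er1 : (1 + 2 * Real.sin y ^ 2 / r ^ 2) ^ ((1/2) : ℝ) = t := by
      rw [htdef, Real.sqrt_eq_rpow]
    have er2 : (1 + 2 * Real.sin y ^ 2 / r ^ 2) ^ (-(1/2) : ℝ) = t⁻¹ := by
      rw [Real.rpow_neg (hB y).le, er1]
    have er3 : (1 + 2 * Real.sin y ^ 2 / r ^ 2) ^ (-(3/2) : ℝ) = (t ^ 3)⁻¹ := by
      rw [show (-(3/2) : ℝ) = -(3/2) from rfl, Real.rpow_neg (hB y).le]
      congr 1
      rw [show ((3:ℝ)/2) = (1/2) * (3:ℕ) by norm_num, Real.rpow_mul (hB y).le,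
        Real.rpow_natCast, ← Real.sqrt_eq_rpow]
    have er4 : (1 + 2 * Real.sin y ^ 2 / r ^ 2) ^ ((-(1/2)) - 1 : ℝ) = (t ^ 3)⁻¹ := by
      rw [show ((-(1/2)) - 1 : ℝ) = -(3/2) by norm_num, er3]
    have ht2' : Real.sin y ^ 2 = (t ^ 2 - 1) * r ^ 2 / 2 := by
      rw [ht2]; field_simp; ring
    have hc : Real.cos y ^ 2 = 1 - Real.sin y ^ 2 := Real.cos_sq' y
    simp only [hg, hg1, hg2, er1, er2, er3, er4, Real.sin_two_mul, Real.cos_two_mul]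
    rw [show (2 * (2 * Real.sin y * Real.cos y) / r ^ 2 * (-(1/2)) * (t ^ 3)⁻¹ *
          (Real.sin y ^ 2 * (2 * Real.sin y * Real.cos y)) +
        t⁻¹ * (2 * Real.sin y * Real.cos y * (2 * Real.sin y * Real.cos y) +
          Real.sin y ^ 2 * ((2 * Real.cos y ^ 2 - 1) * 2))) / r ^ 4
      = (-(4:ℝ) * (Real.sin y ^ 2) ^ 2 * (Real.cos y ^ 2) / r ^ 2 * (t ^ 3)⁻¹
          + t⁻¹ * (4 * (Real.sin y ^ 2) * (Real.cos y ^ 2)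
            + (Real.sin y ^ 2) * (2 * (Real.cos y ^ 2) - 1) * 2)) / r ^ 4 by ring]
    rw [hc, ht2']
    have ht0 : t ≠ 0 := ht.ne'
    field_simp
    ring
  have hFa : F a = 0 := by
    simp [hF, ha, Real.sin_int_mul_pi]
  have hint : ∫ y in a..f, g y = F f - F a :=
    intervalIntegral.integral_eq_sub_of_hasDerivAt (fun y _ => hderiv y)
      (hgc.intervalIntegrable a f)
  calc (1 + 2 * Real.sin f ^ 2 / r ^ 2) ^ (-(1/2) : ℝ) *
        (Real.sin f ^ 2 * Real.sin (2 * f)) / r ^ 4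
      = F f - F a := by rw [hFa]; simp [hF]
    _ = ∫ y in a..f, g y := hint.symm
    _ = (∫ y in a..f, (1 / r ^ 2) * g₁ y) + ∫ y in a..f, (1/2) * g₂ y := by
        rw [hg]
        exact intervalIntegral.integral_add
          ((continuous_const.mul hg1c).intervalIntegrable a f)
          ((continuous_const.mul hg2c).intervalIntegrable a f)
    _ = (1 / r ^ 2) * (∫ y in a..f, g₁ y) + (1/2) * ∫ y in a..f, g₂ y := by
        rw [intervalIntegral.integral_const_mul, intervalIntegral.integral_const_mul]
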